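/- Under the hypotheses of the previous statement with the general adaptive momentum update w_{k+1} = w_k − α_k H_k⁻¹ ∇R_S(w_k + γ_k(w_k − w_{k−1})) + β_k H_k⁻¹ H_{k−1}(w_k − w_{k−1}) initialized at w₀ = w₋₁ = 0, every iterate w_k is a scalar multiple of sign(Xᵀy). -/

import Mathlib

open Finset

lemma sign_eq_self_div_abs {a : ℝ} (ha : a ≠ 0) : Real.sign a = a / |a| := by
  rcases ha.lt_or_gt with h | h
  · rw [Real.sign_of_neg h, abs_of_neg h]
    field_simp
  · rw [Real.sign_of_pos h, abs_of_pos h]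
    field_simp

open Finset in
/-- For the general adaptive momentum update
`w_{k+1} = w_k − α_k H_k⁻¹ ∇R_S(w_k + γ_k (w_k − w_{k−1})) + β_k H_k⁻¹ H_{k−1} (w_k − w_{k−1})`
initialized at `w₀ = w₋₁ = 0` (here `w (k-1)` uses truncated subtraction so that
`w₋₁ = w₀ = 0`), with `R_S(w) = ½‖Xw − y‖²`, every component of `Xᵀ y` nonzero and
`X · sign(Xᵀ y) = c • y`, every iterate is a scalar multiple of `sign(Xᵀ y)`. -/
theorem adaptive_momentum_iterates_sign {n d : ℕ} (X : Matrix (Fin n) (Fin d) ℝ)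
    (y : Fin n → ℝ) (c : ℝ)
    (hnz : ∀ j, X.transpose.mulVec y j ≠ 0)
    (hc : X.mulVec (fun j => Real.sign (X.transpose.mulVec y j)) = c • y)
    (η α β γ : ℕ → ℝ) (hη : ∀ s, 0 < η s)
    (w g : ℕ → Fin d → ℝ)
    (hg : ∀ k, g k =
      X.transpose.mulVec (X.mulVec (w k + γ k • (w k - w (k - 1))) - y))
    (hH : ∀ k j, 0 < ∑ s ∈ range (k + 1), η s * (g s j) ^ 2)
    (hw0 : w 0 = 0)
    (hstep : ∀ k j, w (k + 1) j =
      w k j - α k * (g k j / Real.sqrt (∑ s ∈ range (k + 1), η s * (g s j) ^ 2))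
        + β k * (Real.sqrt (∑ s ∈ range k, η s * (g s j) ^ 2) /
            Real.sqrt (∑ s ∈ range (k + 1), η s * (g s j) ^ 2)) * (w k j - w (k - 1) j)) :
    ∀ k, ∃ lam : ℝ, w k = lam • fun j => Real.sign (X.transpose.mulVec y j) := by
  set a : Fin d → ℝ := X.transpose.mulVec y with ha
  set sgn : Fin d → ℝ := fun j => Real.sign (a j) with hsgn
  intro k
  induction k using Nat.strong_induction_on with
  | _ k ih =>
    match k with
    | 0 => exact ⟨0, by simp [hw0]⟩
    | Nat.succ m =>
      obtain ⟨l1, hl1⟩ := ih m (Nat.lt_succ_self m)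
      obtain ⟨l2, hl2⟩ := ih (m - 1) (lt_of_le_of_lt (Nat.sub_le m 1) (Nat.lt_succ_self m))
      -- each gradient is a scalar multiple of a
      have hgs : ∀ s, ∃ t : ℝ, s ≤ m → ∀ j, g s j = t * a j := by
        intro s
        by_cases hs : s ≤ m
        · obtain ⟨u1, hu1⟩ := ih s (Nat.lt_succ_of_le hs)
          obtain ⟨u2, hu2⟩ := ih (s - 1) (lt_of_le_of_lt (Nat.sub_le s 1) (Nat.lt_succ_of_le hs))
          refine ⟨(u1 + γ s * (u1 - u2)) * c - 1, fun _ j => ?_⟩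
          have hcomb : w s + γ s • (w s - w (s - 1)) = (u1 + γ s * (u1 - u2)) • sgn := by
            rw [hu1, hu2]
            funext i
            simp only [Pi.add_apply, Pi.smul_apply, Pi.sub_apply, smul_eq_mul]
            ring
          have h1 : X.mulVec ((u1 + γ s * (u1 - u2)) • sgn) - y
              = ((u1 + γ s * (u1 - u2)) * c - 1) • y := by
            rw [Matrix.mulVec_smul, hc, smul_smul, sub_smul, one_smul]
          have : g s = ((u1 + γ s * (u1 - u2)) * c - 1) • a := by
            rw [hg s, hcomb, h1, ha, Matrix.mulVec_smul]
          rw [this]; simp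
        · exact ⟨0, fun h => absurd h hs⟩
      choose t ht using hgs
      have hfac : ∀ K, K ≤ m + 1 → ∀ j, ∑ s ∈ range K, η s * (g s j) ^ 2
          = (a j) ^ 2 * ∑ s ∈ range K, η s * (t s) ^ 2 := by
        intro K hK j
        rw [Finset.mul_sum]
        refine Finset.sum_congr rfl fun s hs => ?_
        have hsm : s ≤ m := by have := Finset.mem_range.mp hs; omega
        rw [ht s hsm j]
        ring
      set T := ∑ s ∈ range (m + 1), η s * (t s) ^ 2 with hT
      set T' := ∑ s ∈ range m, η s * (t s) ^ 2 with hT'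
      have hT'nn : 0 ≤ T' :=
        Finset.sum_nonneg fun s _ => mul_nonneg (hη s).le (sq_nonneg _)
      refine ⟨l1 - α m * (t m / Real.sqrt T)
        + β m * (Real.sqrt T' / Real.sqrt T) * (l1 - l2), ?_⟩
      funext j
      have hA : a j ≠ 0 := hnz j
      have hAabs : (0:ℝ) < |a j| := abs_pos.mpr hA
      have hTpos : 0 < T := by
        have := hH m j
        rw [hfac (m + 1) le_rfl j] at this
        nlinarith [sq_nonneg (a j)]
      have hsT : 0 < Real.sqrt T := Real.sqrt_pos.mpr hTpos
      have hsq1 : Real.sqrt (∑ s ∈ range (m + 1), η s * (g s j) ^ 2)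
          = |a j| * Real.sqrt T := by
        rw [hfac (m + 1) le_rfl j, Real.sqrt_mul (sq_nonneg _), Real.sqrt_sq_eq_abs]
      have hsq2 : Real.sqrt (∑ s ∈ range m, η s * (g s j) ^ 2)
          = |a j| * Real.sqrt T' := by
        rw [hfac m (Nat.le_succ m) j, Real.sqrt_mul (sq_nonneg _), Real.sqrt_sq_eq_abs]
      have hsgnj : sgn j = a j / |a j| := sign_eq_self_div_abs hA
      rw [hstep m j, hsq1, hsq2, ht m le_rfl j, hl1, hl2]
      simp only [Pi.smul_apply, smul_eq_mul, hsgnj]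
      field_simp
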